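/- For every real λ and every a ∈ ℝ, ∫_{-∞}^{a} 2·φ(u)·Φ(λu) du = Φ(a) − 2·T(a, λ), where T(h,k) = (1/(2π))·∫_0^k exp(−h²(1+t²)/2)/(1+t²) dt is Owen's T function. -/

import Mathlib

open Real MeasureTheory Set Filter Topology

/-- Standard normal pdf. -/
noncomputable def phi (x : ℝ) : ℝ := (Real.sqrt (2 * Real.pi))⁻¹ * Real.exp (-x ^ 2 / 2)

/-- Standard normal cdf. -/
noncomputable def Phi (x : ℝ) : ℝ := ∫ t in Set.Iic x, phi t

/-- Owen's T function. -/
noncomputable def owenT (h k : ℝ) : ℝ :=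
  (1 / (2 * Real.pi)) * ∫ t in (0:ℝ)..k, Real.exp (-h ^ 2 * (1 + t ^ 2) / 2) / (1 + t ^ 2)

lemma phi_eq (x : ℝ) : phi x = (Real.sqrt (2 * Real.pi))⁻¹ * Real.exp (-(1/2) * x ^ 2) := by
  rw [phi]; ring_nf

lemma phi_nonneg (x : ℝ) : 0 ≤ phi x := by
  rw [phi]; positivity

lemma integrable_phi : Integrable phi := by
  have h := (integrable_exp_neg_mul_sq (by norm_num : (0:ℝ) < 1/2)).const_mul
    (Real.sqrt (2 * Real.pi))⁻¹
  exact h.congr (Filter.Eventually.of_forall fun x => (phi_eq x).symm)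

lemma phi_le (x : ℝ) : phi x ≤ (Real.sqrt (2 * Real.pi))⁻¹ := by
  rw [phi]
  have h1 : Real.exp (-x ^ 2 / 2) ≤ 1 := Real.exp_le_one_iff.2 (by nlinarith [sq_nonneg x])
  calc (Real.sqrt (2 * Real.pi))⁻¹ * Real.exp (-x ^ 2 / 2)
      ≤ (Real.sqrt (2 * Real.pi))⁻¹ * 1 := mul_le_mul_of_nonneg_left h1 (by positivity)
    _ = _ := mul_one _

lemma integral_phi : ∫ x, phi x = 1 := by
  have h : ∫ x, Real.exp (-(1/2) * x ^ 2) = Real.sqrt (Real.pi / (1/2)) :=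
    integral_gaussian (1/2)
  have h2 : ∫ x, phi x = (Real.sqrt (2 * Real.pi))⁻¹ * ∫ x, Real.exp (-(1/2) * x ^ 2) := by
    rw [← integral_const_mul]
    exact integral_congr_ae (Filter.Eventually.of_forall fun x => phi_eq x)
  rw [h2, h, show Real.pi / (1/2) = 2 * Real.pi by ring]
  rw [inv_mul_cancel₀ (by positivity)]

lemma Phi_zero : Phi 0 = 1 / 2 := by
  have heven : ∀ x : ℝ, phi (-x) = phi x := by
    intro x; rw [phi, phi]; ring_nf
  have h1 : Phi 0 = ∫ x in Ioi (-(0:ℝ)), phi x := by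
    rw [Phi, ← integral_comp_neg_Iic]
    exact integral_congr_ae (Filter.Eventually.of_forall fun x => (heven x).symm)
  have h2 : ∫ x in Ioi (0:ℝ), phi x = (Real.sqrt (2 * Real.pi))⁻¹ * (Real.sqrt (Real.pi / (1/2)) / 2) := by
    rw [← integral_gaussian_Ioi (1/2), ← integral_const_mul]
    exact integral_congr_ae (Filter.Eventually.of_forall fun x => phi_eq x)
  rw [h1, neg_zero, h2, show Real.pi / (1/2) = 2 * Real.pi by ring]
  rw [show (Real.sqrt (2*Real.pi))⁻¹ * (Real.sqrt (2*Real.pi)/2) = (Real.sqrt (2*Real.pi))⁻¹ * Real.sqrt (2*Real.pi) / 2 by ring, inv_mul_cancel₀ (by positivity)]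

lemma Phi_nonneg (x : ℝ) : 0 ≤ Phi x :=
  setIntegral_nonneg measurableSet_Iic fun y _ => phi_nonneg y

lemma Phi_le_one (x : ℝ) : Phi x ≤ 1 := by
  rw [← integral_phi]
  exact setIntegral_le_integral integrable_phi
    (Filter.Eventually.of_forall fun y => phi_nonneg y)

lemma Phi_monotone : Monotone Phi := fun x y hxy =>
  setIntegral_mono_set integrable_phi.integrableOn
    (Filter.Eventually.of_forall fun z => phi_nonneg z)
    (HasSubset.Subset.eventuallyLE (Iic_subset_Iic.2 hxy))

lemma Phi_measurable : Measurable Phi := Phi_monotone.measurable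

lemma integral_id_mul_gauss (c a : ℝ) (hc : 0 < c) :
    ∫ u in Set.Iic a, u * Real.exp (-c * u ^ 2) = -Real.exp (-c * a ^ 2) / (2 * c) := by
  have hderiv : ∀ x ∈ Set.Iio a, HasDerivAt (fun u : ℝ => -Real.exp (-c * u ^ 2) / (2 * c))
      (x * Real.exp (-c * x ^ 2)) x := by
    intro x _
    have h1 : HasDerivAt (fun u : ℝ => -c * u ^ 2) (-c * (2 * x)) x := by
      simpa using (hasDerivAt_pow 2 x).const_mul (-c)
    have h2 := ((h1.exp).div_const (2 * c)).neg
    have heq : x * Real.exp (-c * x ^ 2)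
        = -(Real.exp (-c * x ^ 2) * (-c * (2 * x)) / (2 * c)) := by
      have hc' : c ≠ 0 := hc.ne'
      field_simp
    rw [heq]
    have h3 : (fun u : ℝ => -Real.exp (-c * u ^ 2) / (2 * c))
        = -fun u : ℝ => Real.exp (-c * u ^ 2) / (2 * c) := by
      funext u
      exact neg_div _ _
    rw [h3]
    exact h2
  have hint : IntegrableOn (fun u : ℝ => u * Real.exp (-c * u ^ 2)) (Set.Iic a) :=
    (integrable_mul_exp_neg_mul_sq hc).integrableOn
  have htend : Tendsto (fun u : ℝ => -Real.exp (-c * u ^ 2) / (2 * c)) atBot (𝓝 0) := by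
    have hsq : Tendsto (fun u : ℝ => u ^ 2) atBot atTop := by
      have h1 : Tendsto (fun u : ℝ => u ^ 2) atTop atTop := tendsto_pow_atTop (by norm_num)
      exact (h1.comp tendsto_abs_atBot_atTop).congr fun u => by simp [Function.comp, sq_abs]
    have h3 : Tendsto (fun u : ℝ => -c * u ^ 2) atBot atBot :=
      (tendsto_const_mul_atBot_of_neg (by linarith)).2 hsq
    have h4 : Tendsto (fun u : ℝ => Real.exp (-c * u ^ 2)) atBot (𝓝 0) :=
      Real.tendsto_exp_atBot.comp h3
    simpa using (h4.neg).div_const (2 * c)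
  have hcont : ContinuousWithinAt (fun u : ℝ => -Real.exp (-c * u ^ 2) / (2 * c)) (Set.Iic a) a := by
    apply Continuous.continuousWithinAt
    continuity
  simpa using integral_Iic_of_hasDerivAt_of_tendsto hcont hderiv hint htend

lemma Phi_expand (l u : ℝ) :
    phi u * (Phi (l * u) - Phi 0) = ∫ s in (0:ℝ)..l, u * phi u * phi (s * u) := by
  have h1 : Phi (l * u) - Phi 0 = ∫ t in (0:ℝ)..(l * u), phi t := by
    rw [Phi, Phi]
    exact intervalIntegral.integral_Iic_sub_Iic integrable_phi.integrableOn
      integrable_phi.integrableOn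
  have h2 : (u : ℝ) • ∫ s in (0:ℝ)..l, phi (s * u) = ∫ t in (0:ℝ)..(l * u), phi t := by
    simpa using intervalIntegral.smul_integral_comp_mul_right (a := 0) (b := l) phi u
  rw [h1, ← h2, smul_eq_mul, ← mul_assoc, ← intervalIntegral.integral_const_mul]
  refine intervalIntegral.integral_congr fun s _ => ?_
  ring

lemma continuous_phi : Continuous phi := by
  unfold phi; continuity

lemma integrable_abs_mul_phi : Integrable (fun u : ℝ => |u| * phi u) := by
  have h := ((integrable_mul_exp_neg_mul_sq (by norm_num : (0:ℝ) < 1/2)).abs.const_mul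
    (Real.sqrt (2 * Real.pi))⁻¹)
  refine h.congr (Filter.Eventually.of_forall fun x => ?_)
  show (Real.sqrt (2 * Real.pi))⁻¹ * |x * Real.exp (-(1/2) * x ^ 2)| = |x| * phi x
  rw [phi_eq, abs_mul, Real.abs_exp]
  ring

lemma swap_integrals (a l : ℝ) :
    ∫ u in Set.Iic a, (∫ s in (0:ℝ)..l, u * phi u * phi (s * u)) =
    ∫ s in (0:ℝ)..l, (∫ u in Set.Iic a, u * phi u * phi (s * u)) := by
  have hfin : IsFiniteMeasure (volume.restrict (Set.uIoc (0:ℝ) l)) := by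
    constructor
    rw [Measure.restrict_apply_univ, Set.uIoc]
    exact measure_Ioc_lt_top
  have hprod : Integrable (Function.uncurry fun u s => u * phi u * phi (s * u))
      ((volume.restrict (Set.Iic a)).prod (volume.restrict (Set.uIoc 0 l))) := by
    have hdom : Integrable
        (fun p : ℝ × ℝ => (|p.1| * phi p.1) * (Real.sqrt (2 * Real.pi))⁻¹)
        ((volume.restrict (Set.Iic a)).prod (volume.restrict (Set.uIoc 0 l))) :=
      (integrable_abs_mul_phi.restrict).mul_prod (integrable_const _)
    refine hdom.mono ?_ (Filter.Eventually.of_forall fun p => ?_)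
    · refine Continuous.aestronglyMeasurable ?_
      have : Continuous fun p : ℝ × ℝ => p.1 * phi p.1 * phi (p.2 * p.1) := by
        refine ((continuous_fst.mul (continuous_phi.comp continuous_fst)).mul
          (continuous_phi.comp (continuous_snd.mul continuous_fst)))
      exact this
    · simp only [Function.uncurry, Real.norm_eq_abs]
      have hL : |p.1 * phi p.1 * phi (p.2 * p.1)| = |p.1| * phi p.1 * phi (p.2 * p.1) := by
        rw [abs_mul, abs_mul, abs_of_nonneg (phi_nonneg p.1),
          abs_of_nonneg (phi_nonneg (p.2 * p.1))]
      have hR : |(|p.1| * phi p.1 * (Real.sqrt (2 * Real.pi))⁻¹)|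
          = |p.1| * phi p.1 * (Real.sqrt (2 * Real.pi))⁻¹ := abs_of_nonneg
            (mul_nonneg (mul_nonneg (abs_nonneg _) (phi_nonneg _))
              (inv_nonneg.2 (Real.sqrt_nonneg _)))
      rw [hL, hR]
      exact mul_le_mul_of_nonneg_left (phi_le _)
        (mul_nonneg (abs_nonneg _) (phi_nonneg _))
  simp_rw [intervalIntegral.intervalIntegral_eq_integral_uIoc]
  rw [MeasureTheory.integral_smul]
  congr 1
  exact MeasureTheory.integral_integral_swap hprod

lemma inner_integral (a s : ℝ) :
    ∫ u in Set.Iic a, u * phi u * phi (s * u)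
      = (2 * Real.pi)⁻¹ * (-Real.exp (-((1 + s ^ 2) / 2) * a ^ 2) / (1 + s ^ 2)) := by
  have hc : 0 < (1 + s ^ 2) / 2 := by positivity
  have hs : (Real.sqrt (2 * Real.pi))⁻¹ * (Real.sqrt (2 * Real.pi))⁻¹ = (2 * Real.pi)⁻¹ := by
    rw [← mul_inv, Real.mul_self_sqrt (by positivity)]
  have hpt : ∀ u : ℝ, u * phi u * phi (s * u)
      = (2 * Real.pi)⁻¹ * (u * Real.exp (-((1 + s ^ 2) / 2) * u ^ 2)) := by
    intro u
    rw [phi, phi]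
    calc u * ((Real.sqrt (2 * Real.pi))⁻¹ * Real.exp (-u ^ 2 / 2))
          * ((Real.sqrt (2 * Real.pi))⁻¹ * Real.exp (-(s * u) ^ 2 / 2))
        = ((Real.sqrt (2 * Real.pi))⁻¹ * (Real.sqrt (2 * Real.pi))⁻¹)
          * (u * (Real.exp (-u ^ 2 / 2) * Real.exp (-(s * u) ^ 2 / 2))) := by ring
      _ = (2 * Real.pi)⁻¹ * (u * Real.exp (-((1 + s ^ 2) / 2) * u ^ 2)) := by
          rw [hs, ← Real.exp_add,
            show -u ^ 2 / 2 + -(s * u) ^ 2 / 2 = -((1 + s ^ 2) / 2) * u ^ 2 by ring]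
  simp_rw [hpt]
  rw [MeasureTheory.integral_const_mul, integral_id_mul_gauss _ _ hc,
    show 2 * ((1 + s ^ 2) / 2) = 1 + s ^ 2 by ring]

theorem skew_normal_cdf_owen (l a : ℝ) :
    ∫ u in Set.Iic a, 2 * phi u * Phi (l * u) = Phi a - 2 * owenT a l := by
  have hint2 : IntegrableOn (fun u => phi u * (Phi (l * u) - Phi 0)) (Set.Iic a) := by
    refine Integrable.mono integrable_phi.integrableOn ?_
      (Filter.Eventually.of_forall fun u => ?_)
    · exact (continuous_phi.measurable.mul
        ((Phi_measurable.comp (measurable_const_mul l)).sub measurable_const)).aestronglyMeasurable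
    · rw [Real.norm_eq_abs, Real.norm_eq_abs, abs_mul, abs_of_nonneg (phi_nonneg u)]
      have h1 : |Phi (l * u) - Phi 0| ≤ 1 := by
        rw [abs_le]
        constructor
        · have := Phi_nonneg (l * u); have := Phi_le_one 0; linarith
        · have := Phi_le_one (l * u); have := Phi_nonneg 0; linarith
      calc phi u * |Phi (l * u) - Phi 0| ≤ phi u * 1 :=
            mul_le_mul_of_nonneg_left h1 (phi_nonneg u)
        _ = phi u := mul_one _
  have step1 : ∫ u in Set.Iic a, 2 * phi u * Phi (l * u)
      = (∫ u in Set.Iic a, phi u)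
        + 2 * ∫ u in Set.Iic a, phi u * (Phi (l * u) - Phi 0) := by
    rw [← MeasureTheory.integral_const_mul,
      ← MeasureTheory.integral_add integrable_phi.integrableOn (hint2.const_mul 2)]
    refine integral_congr_ae (Filter.Eventually.of_forall fun u => ?_)
    have h0 := Phi_zero
    show 2 * phi u * Phi (l * u) = phi u + 2 * (phi u * (Phi (l * u) - Phi 0))
    rw [h0]; ring
  have step2 : ∫ u in Set.Iic a, phi u * (Phi (l * u) - Phi 0)
      = ∫ s in (0:ℝ)..l, (2 * Real.pi)⁻¹
          * (-Real.exp (-((1 + s ^ 2) / 2) * a ^ 2) / (1 + s ^ 2)) := by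
    rw [show (fun u => phi u * (Phi (l * u) - Phi 0))
        = fun u => ∫ s in (0:ℝ)..l, u * phi u * phi (s * u) from funext fun u => Phi_expand l u]
    rw [swap_integrals]
    exact intervalIntegral.integral_congr fun s _ => inner_integral a s
  have howen : ∫ s in (0:ℝ)..l, (2 * Real.pi)⁻¹
      * (-Real.exp (-((1 + s ^ 2) / 2) * a ^ 2) / (1 + s ^ 2)) = -owenT a l := by
    rw [owenT, intervalIntegral.integral_const_mul]
    have hcong : ∫ s in (0:ℝ)..l, -Real.exp (-((1 + s ^ 2) / 2) * a ^ 2) / (1 + s ^ 2)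
        = ∫ s in (0:ℝ)..l, -(Real.exp (-a ^ 2 * (1 + s ^ 2) / 2) / (1 + s ^ 2)) := by
      refine intervalIntegral.integral_congr fun s _ => ?_
      rw [show -((1 + s ^ 2) / 2) * a ^ 2 = -a ^ 2 * (1 + s ^ 2) / 2 by ring, neg_div]
    rw [hcong, intervalIntegral.integral_neg]
    ring
  rw [step1, step2, howen]
  have : (∫ u in Set.Iic a, phi u) = Phi a := rfl
  rw [this]
  ring
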